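/- Let η ∈ ℝ and let F : ℝ³ → ℝ³ be the Baiti–Jenssen flux with parameter η. Then F is differentiable at every point, and for every U = (u,v,w) ∈ ℝ³ the derivative of F at U applied to the vector r₁(U) = (1, 0, v) equals λ₁(U) · r₁(U), where λ₁(u,v,w) = 2η(w − (v−2)u) − 4. That is, (fderiv F U)(1,0,v) = (2η(w − (v−2)u) − 4) • (1,0,v), so r₁(U) is an eigenvector of the Jacobian of F at U with eigenvalue λ₁(U). -/

import Mathlib

/-- The Baiti–Jenssen flux with parameter `η`. -/
noncomputable def BJflux (η : ℝ) : ℝ × ℝ × ℝ → ℝ × ℝ × ℝ :=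
  fun U =>
    (4 * ((U.2.1 - 1) * U.1 - U.2.2) + 2 * η * (U.1 * U.2.2 - U.1 ^ 2 * (U.2.1 - 1)),
     U.2.1 ^ 2,
     4 * (U.2.1 * (U.2.1 - 2) * U.1 - (U.2.1 - 1) * U.2.2)
       + η * (U.2.2 ^ 2 - U.1 ^ 2 * (U.2.1 - 2) * U.2.1))

theorem bj_r1_eigenvector (η : ℝ) :
    (∀ U : ℝ × ℝ × ℝ, DifferentiableAt ℝ (BJflux η) U) ∧
    ∀ u v w : ℝ,
      fderiv ℝ (BJflux η) (u, v, w) ((1 : ℝ), (0 : ℝ), v) =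
        (2 * η * (w - (v - 2) * u) - 4) • ((1 : ℝ), (0 : ℝ), v) := by
  have hdiff : ∀ U : ℝ × ℝ × ℝ, DifferentiableAt ℝ (BJflux η) U := by
    intro U
    unfold BJflux
    fun_prop
  refine ⟨hdiff, fun u v w => ?_⟩
  have ha : HasDerivAt (fun t : ℝ => u + t) 1 0 := (hasDerivAt_id 0).const_add u
  have hb : HasDerivAt (fun t : ℝ => w + t * v) v 0 := by
    simpa using ((hasDerivAt_id 0).mul_const v).const_add w
  -- first component
  have h11 := (((ha.const_mul (v - 1)).sub hb).const_mul 4)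
  have h12 := (((ha.mul hb).sub ((ha.pow 2).mul_const (v - 1))).const_mul (2 * η))
  have h1 := h11.add h12
  -- second component
  have h2 : HasDerivAt (fun _ : ℝ => v ^ 2) 0 0 := hasDerivAt_const 0 (v ^ 2)
  -- third component
  have h31 := (((ha.const_mul (v * (v - 2))).sub (hb.const_mul (v - 1))).const_mul 4)
  have h32 := (((hb.pow 2).sub (((ha.pow 2).mul_const (v - 2)).mul_const v)).const_mul η)
  have h3 := h31.add h32
  have hD := h1.prodMk (h2.prodMk h3)
  -- the line
  have hg : HasDerivAt (fun t : ℝ => ((u + t, v, w + t * v) : ℝ × ℝ × ℝ))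
      ((1 : ℝ), (0 : ℝ), v) 0 := ha.prodMk ((hasDerivAt_const 0 v).prodMk hb)
  have hF : HasFDerivAt (BJflux η) (fderiv ℝ (BJflux η) (u, v, w))
      ((fun t : ℝ => ((u + t, v, w + t * v) : ℝ × ℝ × ℝ)) 0) := by
    simpa using (hdiff (u, v, w)).hasFDerivAt
  have hcomp := hF.comp_hasDerivAt 0 hg
  have heq := hcomp.unique hD
  rw [heq]
  simp only [Prod.smul_mk, smul_eq_mul, Prod.mk.injEq]
  refine ⟨by ring, by ring, by ring⟩
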